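/- Let M̃ be the companion matrix of f(x) = x^n + c acting on Z^n (M̃ e_j = e_{j-1} for j ≥ 2, M̃ e_1 = -c e_n), with c an integer, |c| ≥ 2, q ≥ 2 an integer with gcd(q, c) = 1, and define Z_j = (M̃^*)^j(Z_0) for j ≥ 1 where Z_0 = {ξ ∈ R^n : ξ_n ∈ (Z + {1/q, ..., (q-1)/q})}. Then ∪_{j≥1} Z_j = ∪_{j=1}^n Z_j. -/

import Mathlib

open Matrix

lemma aux_pow_18 (n : ℕ) (hn : 0 < n) (c : ℤ) (Mt : Matrix (Fin n) (Fin n) ℤ)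
    (hM : ∀ i j : Fin n, Mt i j =
      (if (j : ℕ) = 0 then (if (i : ℕ) = n - 1 then -c else 0)
       else if (i : ℕ) + 1 = (j : ℕ) then 1 else 0)) :
    Mt ^ n = (-c) • (1 : Matrix (Fin n) (Fin n) ℤ) := by
  have key : ∀ k, k ≤ n → Mt ^ k = Matrix.of (fun i j : Fin n =>
      if (j : ℕ) = (i : ℕ) + k then 1 else if (j : ℕ) + n = (i : ℕ) + k then -c else 0) := by
    intro k
    induction k with
    | zero =>
      intro _
      ext i j
      simp only [pow_zero, Matrix.one_apply, Matrix.of_apply, Nat.add_zero]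
      by_cases h : i = j
      · subst h; simp
      · have hv : (j : ℕ) ≠ (i : ℕ) := fun h' => h (Fin.ext h'.symm)
        have h2 : (j : ℕ) + n ≠ (i : ℕ) := by omega
        simp [h, hv, h2]
    | succ k ih =>
      intro hk
      have hk' : k ≤ n := by omega
      rw [pow_succ, ih hk']
      ext i j
      rw [Matrix.mul_apply]
      simp only [Matrix.of_apply]
      have hi : (i : ℕ) < n := i.isLt
      by_cases hj : (j : ℕ) = 0
      · have hsum : ∀ l : Fin n,
            (if (l : ℕ) = (i : ℕ) + k then (1:ℤ) else if (l : ℕ) + n = (i : ℕ) + k then -c else 0) * Mt l j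
            = if l = (⟨n-1, by omega⟩ : Fin n) then
                (if (n-1 : ℕ) = (i : ℕ) + k then (1:ℤ) else if (n-1 : ℕ) + n = (i : ℕ) + k then -c else 0) * (-c)
              else 0 := by
          intro l
          rw [hM l j]
          simp only [hj, if_pos rfl]
          by_cases hl : (l : ℕ) = n - 1
          · have : l = (⟨n-1, by omega⟩ : Fin n) := Fin.ext hl
            simp [this, hl]
          · have : l ≠ (⟨n-1, by omega⟩ : Fin n) := by
              intro h; exact hl (congrArg Fin.val h)
            simp [hl, this]
        rw [Finset.sum_congr rfl (fun l _ => hsum l), Finset.sum_ite_eq' Finset.univ]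
        simp only [Finset.mem_univ, if_pos, hj]
        have hne : ¬ (n - 1 + n = (i : ℕ) + k) := by omega
        have h0 : ¬ ((0:ℕ) = (i : ℕ) + (k+1)) := by omega
        split_ifs <;> first | ring1 | omega | contradiction
      · have hj1 : 1 ≤ (j : ℕ) := by omega
        have hjm : (j : ℕ) - 1 < n := by omega
        have hfix : (j : ℕ) - 1 + 1 = (j : ℕ) := by omega
        have hsum : ∀ l : Fin n,
            (if (l : ℕ) = (i : ℕ) + k then (1:ℤ) else if (l : ℕ) + n = (i : ℕ) + k then -c else 0) * Mt l j
            = if l = (⟨(j:ℕ)-1, hjm⟩ : Fin n) then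
                (if ((j:ℕ)-1 : ℕ) = (i : ℕ) + k then (1:ℤ) else if ((j:ℕ)-1 : ℕ) + n = (i : ℕ) + k then -c else 0)
              else 0 := by
          intro l
          rw [hM l j]
          simp only [if_neg hj]
          by_cases hl : (l : ℕ) + 1 = (j : ℕ)
          · have hlv : (l : ℕ) = (j:ℕ) - 1 := by omega
            have hle : l = (⟨(j:ℕ)-1, hjm⟩ : Fin n) := Fin.ext hlv
            simp [hle, hlv, hfix]
          · have hne : l ≠ (⟨(j:ℕ)-1, hjm⟩ : Fin n) := by
              intro h
              apply hl
              have := congrArg Fin.val h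
              simp at this
              omega
            simp [hl, hne]
        rw [Finset.sum_congr rfl (fun l _ => hsum l), Finset.sum_ite_eq' Finset.univ]
        simp only [Finset.mem_univ, if_pos]
        split_ifs <;> omega
  rw [key n le_rfl]
  ext i j
  simp only [Matrix.of_apply, Matrix.smul_apply, Matrix.one_apply]
  have hi : (i : ℕ) < n := i.isLt
  have hj : (j : ℕ) < n := j.isLt
  by_cases h : i = j
  · subst h
    have h1 : ¬ ((i:ℕ) = (i:ℕ) + n) := by omega
    simp [h1, hn.ne']
  · have h1 : ¬ ((j:ℕ) = (i:ℕ) + n) := by omega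
    have h2 : ¬ ((j:ℕ) + n = (i:ℕ) + n) := fun hh => h (Fin.ext (by omega))
    simp [h1, h2, h, Fin.val_ne_of_ne (Ne.symm h)]

/-- Let `M̃` be the companion matrix of `x^n + c` (`M̃ e_j = e_{j-1}`
for `j ≥ 2`, `M̃ e_1 = -c e_n`), `|c| ≥ 2`, `q ≥ 2` with `gcd(q, c) = 1`, and
`Z_j = (M̃ᵀ)^j(Z_0)` where `Z_0 = {ξ ∈ ℝ^n : q ξ_n ∈ ℤ, ξ_n ∉ ℤ}`. Then
`⋃_{j ≥ 1} Z_j = ⋃_{j=1}^n Z_j`. -/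
theorem stmt_18 (n : ℕ) (hn : 0 < n) (q c : ℤ) (hq : 2 ≤ q) (hc : 2 ≤ |c|)
    (hgcd : IsCoprime q c)
    (Mt : Matrix (Fin n) (Fin n) ℤ)
    (hM : ∀ i j : Fin n, Mt i j =
      (if (j : ℕ) = 0 then (if (i : ℕ) = n - 1 then -c else 0)
       else if (i : ℕ) + 1 = (j : ℕ) then 1 else 0))
    (Z : ℕ → Set (Fin n → ℝ))
    (hZ0 : Z 0 = {ξ : Fin n → ℝ | ∃ m : ℤ, ¬ (q ∣ m) ∧
      ξ ⟨n - 1, by omega⟩ = (m : ℝ) / (q : ℝ)})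
    (hZ : ∀ j : ℕ, Z j =
      (fun ξ : Fin n → ℝ => ((Mt.transpose ^ j).map (Int.cast : ℤ → ℝ)) *ᵥ ξ) '' Z 0) :
    (⋃ j ∈ {j : ℕ | 1 ≤ j}, Z j) = ⋃ j ∈ {j : ℕ | 1 ≤ j ∧ j ≤ n}, Z j := by
  have hpow : Mt ^ n = (-c) • (1 : Matrix (Fin n) (Fin n) ℤ) := aux_pow_18 n hn c Mt hM
  have hpowT : Mt.transpose ^ n = (-c) • (1 : Matrix (Fin n) (Fin n) ℤ) := by
    rw [← Matrix.transpose_pow, hpow, Matrix.transpose_smul, Matrix.transpose_one]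
  -- the n-th power map sends Z 0 into Z 0
  have hkey : ∀ ξ ∈ Z 0, ((Mt.transpose ^ n).map (Int.cast : ℤ → ℝ)) *ᵥ ξ ∈ Z 0 := by
    intro ξ hξ
    rw [hZ0] at hξ ⊢
    obtain ⟨m, hm, hval⟩ := hξ
    refine ⟨-c * m, ?_, ?_⟩
    · intro hdvd
      apply hm
      have : q ∣ c * m := by
        have := (dvd_neg).mpr hdvd
        simpa [neg_mul] using this
      exact (hgcd.dvd_of_dvd_mul_left this)
    · rw [hpowT]
      have hv : ∀ i : Fin n,
          ((((-c) • (1 : Matrix (Fin n) (Fin n) ℤ)).map (Int.cast : ℤ → ℝ)) *ᵥ ξ) i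
            = (-(c : ℝ)) * ξ i := by
        intro i
        have hterm : ∀ j : Fin n,
            ((((-c) • (1 : Matrix (Fin n) (Fin n) ℤ)).map (Int.cast : ℤ → ℝ)) i j) * ξ j
              = if j = i then -(c : ℝ) * ξ i else 0 := by
          intro j
          by_cases h : j = i
          · subst h
            rw [Matrix.map_apply, Matrix.smul_apply, Matrix.one_apply_eq, smul_eq_mul,
              mul_one, Int.cast_neg, if_pos rfl]
          · rw [Matrix.map_apply, Matrix.smul_apply, Matrix.one_apply_ne (Ne.symm h),
              smul_zero, Int.cast_zero, zero_mul, if_neg h]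
        show (∑ j, (((-c) • (1 : Matrix (Fin n) (Fin n) ℤ)).map (Int.cast : ℤ → ℝ)) i j * ξ j)
          = -(c : ℝ) * ξ i
        rw [Finset.sum_congr rfl (fun j _ => hterm j), Finset.sum_ite_eq' Finset.univ i]
        simp
      rw [hv, hval]
      push_cast
      ring
  -- Z (n + k) ⊆ Z k
  have hstep : ∀ k : ℕ, Z (n + k) ⊆ Z k := by
    intro k η hη
    rw [hZ (n + k)] at hη
    obtain ⟨ξ, hξ, rfl⟩ := hη
    rw [hZ k]
    refine ⟨((Mt.transpose ^ n).map (Int.cast : ℤ → ℝ)) *ᵥ ξ, hkey ξ hξ, ?_⟩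
    simp only
    rw [Matrix.mulVec_mulVec, show n + k = k + n by omega, pow_add]
    exact congrArg (fun A : Matrix (Fin n) (Fin n) ℝ => A *ᵥ ξ)
      (Matrix.map_mul (L := Mt.transpose ^ k) (M := Mt.transpose ^ n)
        (f := Int.castRingHom ℝ)).symm
  -- every Z j with j ≥ 1 is contained in the finite union
  have hmain : ∀ j : ℕ, 1 ≤ j → Z j ⊆ ⋃ j' ∈ {j' : ℕ | 1 ≤ j' ∧ j' ≤ n}, Z j' := by
    intro j
    induction j using Nat.strong_induction_on with
    | _ j ih =>
      intro hj1
      by_cases hjn : j ≤ n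
      · exact Set.subset_biUnion_of_mem (u := Z) ⟨hj1, hjn⟩
      · have hj' : j = n + (j - n) := by omega
        have h1 : Z j ⊆ Z (j - n) := by
          have := hstep (j - n)
          rwa [← hj'] at this
        exact h1.trans (ih (j - n) (by omega) (by omega))
  apply le_antisymm
  · refine Set.iUnion₂_subset ?_
    intro j hj
    exact hmain j hj
  · refine Set.iUnion₂_subset ?_
    intro j hj
    exact Set.subset_biUnion_of_mem (u := Z) hj.1
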